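/- The algorithm DPTheilSen, which on input a multiset d of n points in ℝ², privacy parameter ε > 0, and hyperparameters R, θ > 0, computes the multiset S_d of all C(n,2) pairwise slopes (with the Slope convention) and outputs DPWide(S_d, ε/(n−1), (1/2, [−R,R], θ)), is ε-differentially private with respect to neighboring size-n multisets. -/

import Mathlib

open MeasureTheory

/-- Multiset distance: half the L1 distance between multiplicity functions. -/
noncomputable def msDist {α : Type*} (d d' : Multiset α) : ℕ :=
  letI := Classical.decEq α
  ((d - d').card + (d' - d).card) / 2

/-- `ε`-differential privacy for randomized algorithms on size-`n` multisets. -/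
def IsDP {W O : Type*} [MeasurableSpace O] (n : ℕ)
    (M : Multiset W → Measure O) (ε : ℝ) : Prop :=
  ∀ d d' : Multiset W, Multiset.card d = n → Multiset.card d' = n → msDist d d' = 1 →
    ∀ E : Set O, MeasurableSet E →
      M d E ≤ ENNReal.ofReal (Real.exp ε) * M d' E

/-- The Slope convention for an unordered pair of points. -/
noncomputable def uslope (w w' : ℝ × ℝ) : EReal :=
  if w = w' then 0
  else if w.1 = w'.1 then ⊤
  else (((w'.2 - w.2) / (w'.1 - w.1) : ℝ) : EReal)

lemma uslope_symm (w w' : ℝ × ℝ) : uslope w w' = uslope w' w := by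
  unfold uslope
  rcases eq_or_ne w w' with h | h
  · simp [h]
  · rw [if_neg h, if_neg (Ne.symm h)]
    rcases eq_or_ne w.1 w'.1 with h1 | h1
    · simp [h1]
    · rw [if_neg h1, if_neg (Ne.symm h1)]
      norm_cast
      rw [div_eq_div_iff (by exact sub_ne_zero.mpr (Ne.symm h1)) (by exact sub_ne_zero.mpr h1)]
      ring

/-- The slope of an unordered pair of points. -/
noncomputable def slopeSym2 : Sym2 (ℝ × ℝ) → EReal :=
  Sym2.lift ⟨uslope, uslope_symm⟩

/-- The multiset `S_d` of the `C(n,2)` pairwise slopes of a multiset `d` of points. -/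
noncomputable def slopesOf (d : Multiset (ℝ × ℝ)) : Multiset EReal :=
  letI := Classical.decEq (Sym2 (ℝ × ℝ))
  (d.sym2 - d.map (fun w => Sym2.mk w w)).map slopeSym2

/-- The widened utility function `u_s(y) = - min_{z ∈ [y-θ,y+θ]} |#{i : s_i ≤ z} - q·N|`. -/
noncomputable def uWide (q θ : ℝ) (s : Multiset EReal) (y : ℝ) : ℝ :=
  - sInf ((fun z : ℝ =>
      |((s.filter (fun t => t ≤ (z : EReal))).card : ℝ) - q * (Multiset.card s : ℝ)|) ''
    Set.Icc (y - θ) (y + θ))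

/-- The widened exponential mechanism `DPWide(s, ε, (q, [-R,R], θ))`. -/
noncomputable def dpWide (ε q R θ : ℝ) (s : Multiset EReal) : Measure ℝ :=
  let μ := (volume.restrict (Set.Icc (-R) R)).withDensity
    (fun y => ENNReal.ofReal (Real.exp (ε / 2 * uWide q θ s y)))
  (μ Set.univ)⁻¹ • μ

section Aux

lemma diag_le_sym2' {α : Type*} [DecidableEq (Sym2 α)] (m : Multiset α) :
    m.map (fun w => Sym2.mk w w) ≤ m.sym2 := by
  induction m using Multiset.induction with
  | empty => simp
  | cons a m ih =>
    rw [Multiset.map_cons, Multiset.sym2_cons, Multiset.map_cons, Multiset.cons_add]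
    exact Multiset.cons_le_cons _ (le_trans ih (Multiset.le_add_left _ _))

lemma slopesOf_cons (a : ℝ × ℝ) (m : Multiset (ℝ × ℝ)) :
    slopesOf (a ::ₘ m) = m.map (fun b => uslope a b) + slopesOf m := by
  letI := Classical.decEq (Sym2 (ℝ × ℝ))
  unfold slopesOf
  rw [Multiset.sym2_cons, Multiset.map_cons, Multiset.map_cons, Multiset.cons_add]
  have h1 : (Sym2.mk a a ::ₘ (Multiset.map (fun b => s(a, b)) m + m.sym2))
      - (Sym2.mk a a ::ₘ Multiset.map (fun w => Sym2.mk w w) m)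
      = (Multiset.map (fun b => s(a, b)) m + m.sym2)
        - Multiset.map (fun w => Sym2.mk w w) m := by
    ext x
    simp only [Multiset.count_sub, Multiset.count_cons]
    rcases eq_or_ne x (Sym2.mk a a) with h | h <;> simp [h]
  rw [h1, add_tsub_assoc_of_le (diag_le_sym2' m), Multiset.map_add, Multiset.map_map]
  congr 1

lemma uWide_add_le (q θ : ℝ) (hθ : 0 < θ) (A B C : Multiset EReal)
    (hAB : Multiset.card A = Multiset.card B) (y : ℝ) :
    uWide q θ (A + C) y ≤ uWide q θ (B + C) y + Multiset.card A := by
  unfold uWide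
  set I := Set.Icc (y - θ) (y + θ) with hI
  set f1 := fun z : ℝ =>
      |(((A + C).filter (fun t => t ≤ (z : EReal))).card : ℝ) - q * (Multiset.card (A + C) : ℝ)|
  set f2 := fun z : ℝ =>
      |(((B + C).filter (fun t => t ≤ (z : EReal))).card : ℝ) - q * (Multiset.card (B + C) : ℝ)|
  have hIne : I.Nonempty := ⟨y, by constructor <;> simp <;> linarith⟩
  have hpt : ∀ z ∈ I, f2 z ≤ f1 z + Multiset.card A := by
    intro z _
    have hcard : Multiset.card (A + C) = Multiset.card (B + C) := by
      simp [hAB]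
    have hFA : ((A.filter (fun t => t ≤ (z : EReal))).card : ℝ) ≤ Multiset.card A := by
      exact_mod_cast Multiset.card_le_card (Multiset.filter_le _ _)
    have hFB : ((B.filter (fun t => t ≤ (z : EReal))).card : ℝ) ≤ Multiset.card A := by
      rw [hAB]
      exact_mod_cast Multiset.card_le_card (Multiset.filter_le _ _)
    have hFA0 : (0:ℝ) ≤ ((A.filter (fun t => t ≤ (z : EReal))).card : ℝ) := by positivity
    have hFB0 : (0:ℝ) ≤ ((B.filter (fun t => t ≤ (z : EReal))).card : ℝ) := by positivity
    simp only [f1, f2, Multiset.filter_add, Multiset.card_add, Nat.cast_add, hcard]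
    rw [abs_le] at *
    constructor <;> cases abs_le.mp (le_refl |(((B + C).filter (fun t => t ≤ (z : EReal))).card : ℝ)|) <;>
      cases abs_cases ((((A.filter (fun t => t ≤ (z : EReal))).card : ℝ) +
        ((C.filter (fun t => t ≤ (z : EReal))).card : ℝ)) - q * ((Multiset.card B : ℝ) + (Multiset.card C : ℝ))) <;>
      cases abs_cases ((((B.filter (fun t => t ≤ (z : EReal))).card : ℝ) +
        ((C.filter (fun t => t ≤ (z : EReal))).card : ℝ)) - q * ((Multiset.card B : ℝ) + (Multiset.card C : ℝ))) <;>
      linarith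
  have hbdd2 : BddBelow (f1 '' I) := ⟨0, by rintro b ⟨z, _, rfl⟩; exact abs_nonneg _⟩
  have h1 : sInf (f2 '' I) ≤ sInf (f1 '' I) + Multiset.card A := by
    have hlb : ∀ b ∈ f1 '' I, sInf (f2 '' I) - Multiset.card A ≤ b := by
      rintro b ⟨z, hz, rfl⟩
      have : sInf (f2 '' I) ≤ f2 z := csInf_le
        ⟨0, by rintro b ⟨z', _, rfl⟩; exact abs_nonneg _⟩ ⟨z, hz, rfl⟩
      linarith [hpt z hz]
    have := le_csInf (hIne.image f1) hlb
    linarith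
  linarith

lemma dpWide_ratio (ε q R θ Δ : ℝ) (hε : 0 ≤ ε) (s s' : Multiset EReal)
    (h1 : ∀ y, uWide q θ s y ≤ uWide q θ s' y + Δ)
    (h2 : ∀ y, uWide q θ s' y ≤ uWide q θ s y + Δ)
    (E : Set ℝ) (hE : MeasurableSet E) :
    dpWide ε q R θ s E ≤ ENNReal.ofReal (Real.exp (ε * Δ)) * dpWide ε q R θ s' E := by
  set c : ENNReal := ENNReal.ofReal (Real.exp (ε / 2 * Δ)) with hc
  have hc0 : c ≠ 0 := by
    simp [hc, ENNReal.ofReal_eq_zero, not_le, Real.exp_pos]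
  have hctop : c ≠ ⊤ := ENNReal.ofReal_ne_top
  set f : ℝ → ENNReal := fun y => ENNReal.ofReal (Real.exp (ε / 2 * uWide q θ s y)) with hf
  set g : ℝ → ENNReal := fun y => ENNReal.ofReal (Real.exp (ε / 2 * uWide q θ s' y)) with hg
  have hfg : ∀ y, f y ≤ c * g y := by
    intro y
    rw [hf, hg, hc, ← ENNReal.ofReal_mul (Real.exp_pos _).le, ← Real.exp_add]
    apply ENNReal.ofReal_le_ofReal
    apply Real.exp_le_exp.mpr
    nlinarith [h1 y]
  have hgf : ∀ y, g y ≤ c * f y := by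
    intro y
    rw [hf, hg, hc, ← ENNReal.ofReal_mul (Real.exp_pos _).le, ← Real.exp_add]
    apply ENNReal.ofReal_le_ofReal
    apply Real.exp_le_exp.mpr
    nlinarith [h2 y]
  set ν := volume.restrict (Set.Icc (-R) R) with hν
  have key : ∀ (F : Set ℝ), MeasurableSet F →
      (ν.withDensity f) F ≤ c * (ν.withDensity g) F := by
    intro F hF
    rw [withDensity_apply _ hF, withDensity_apply _ hF, ← lintegral_const_mul' c g hctop]
    exact lintegral_mono fun y => hfg y
  have key' : (ν.withDensity g) Set.univ ≤ c * (ν.withDensity f) Set.univ := by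
    rw [withDensity_apply _ MeasurableSet.univ, withDensity_apply _ MeasurableSet.univ,
      ← lintegral_const_mul' c f hctop]
    exact lintegral_mono fun y => hgf y
  have hinv : ((ν.withDensity f) Set.univ)⁻¹ ≤ c * ((ν.withDensity g) Set.univ)⁻¹ := by
    have h3 : (c * (ν.withDensity f) Set.univ)⁻¹ ≤ ((ν.withDensity g) Set.univ)⁻¹ :=
      ENNReal.inv_le_inv' key'
    calc ((ν.withDensity f) Set.univ)⁻¹
        = c * (c * (ν.withDensity f) Set.univ)⁻¹ := by
          rw [ENNReal.mul_inv (Or.inl hc0) (Or.inl hctop), ← mul_assoc,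
            ENNReal.mul_inv_cancel hc0 hctop, one_mul]
      _ ≤ c * ((ν.withDensity g) Set.univ)⁻¹ := mul_le_mul_right h3 c
  show (((ν.withDensity f) Set.univ)⁻¹ • (ν.withDensity f)) E ≤ _ *
      (((ν.withDensity g) Set.univ)⁻¹ • (ν.withDensity g)) E
  rw [Measure.smul_apply, Measure.smul_apply, smul_eq_mul, smul_eq_mul]
  calc ((ν.withDensity f) Set.univ)⁻¹ * (ν.withDensity f) E
      ≤ (c * ((ν.withDensity g) Set.univ)⁻¹) * (c * (ν.withDensity g) E) :=
        mul_le_mul' hinv (key E hE)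
    _ = (c * c) * (((ν.withDensity g) Set.univ)⁻¹ * (ν.withDensity g) E) := by ring
    _ = ENNReal.ofReal (Real.exp (ε * Δ)) *
        (((ν.withDensity g) Set.univ)⁻¹ * (ν.withDensity g) E) := by
        rw [hc, ← ENNReal.ofReal_mul (Real.exp_pos _).le, ← Real.exp_add]
        norm_num
        ring_nf

end Aux

/-- **Privacy of `DPTheilSen`** (Lemma 5 of the paper): the algorithm that computes the
multiset `S_d` of all `C(n,2)` pairwise slopes of the input dataset `d` and outputs
`DPWide(S_d, ε/(n-1), (1/2, [-R,R], θ))` is `ε`-differentially private. -/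

theorem dpTheilSen_is_DP
    (n : ℕ) (hn : 2 ≤ n) (ε R θ : ℝ) (hε : 0 < ε) (hR : 0 < R) (hθ : 0 < θ ∧ θ < R) :
    IsDP n (fun d : Multiset (ℝ × ℝ) =>
      dpWide (ε / ((n : ℝ) - 1)) (1 / 2) R θ (slopesOf d)) ε := by
  obtain ⟨hθ0, hθR⟩ := hθ
  intro d d' hd hd' hdist E hE
  letI := Classical.decEq (ℝ × ℝ)
  -- decompose the neighboring datasets
  set u := d - d' with hu
  set v := d' - d with hv
  set w := d ∩ d' with hw
  have hdw : u + w = d := Multiset.sub_add_inter d d'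
  have hd'w : v + w = d' := by
    rw [hw, Multiset.inter_comm]
    exact Multiset.sub_add_inter d' d
  have hcu : Multiset.card u + Multiset.card w = n := by
    rw [← Multiset.card_add, hdw, hd]
  have hcv : Multiset.card v + Multiset.card w = n := by
    rw [← Multiset.card_add, hd'w, hd']
  have hdist' : (Multiset.card u + Multiset.card v) / 2 = 1 := hdist
  have hu1 : Multiset.card u = 1 := by omega
  have hv1 : Multiset.card v = 1 := by omega
  obtain ⟨a, ha⟩ := Multiset.card_eq_one.mp hu1
  obtain ⟨b, hb⟩ := Multiset.card_eq_one.mp hv1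
  have hda : d = a ::ₘ w := by rw [← hdw, ha, Multiset.singleton_add]
  have hd'b : d' = b ::ₘ w := by rw [← hd'w, hb, Multiset.singleton_add]
  have hcw : Multiset.card w = n - 1 := by omega
  have hn1 : ((Multiset.card w : ℝ)) = (n : ℝ) - 1 := by
    rw [hcw]
    have : (1:ℕ) ≤ n := by omega
    push_cast [this]
    ring
  have hnpos : (0:ℝ) < (n : ℝ) - 1 := by
    have : (2:ℝ) ≤ (n:ℝ) := by exact_mod_cast hn
    linarith
  have hε0 : 0 ≤ ε / ((n : ℝ) - 1) := le_of_lt (div_pos hε hnpos)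
  have hsl : slopesOf d = w.map (fun x => uslope a x) + slopesOf w := by
    rw [hda, slopesOf_cons]
  have hsl' : slopesOf d' = w.map (fun x => uslope b x) + slopesOf w := by
    rw [hd'b, slopesOf_cons]
  have hcards : Multiset.card (w.map (fun x => uslope a x))
      = Multiset.card (w.map (fun x => uslope b x)) := by
    simp
  have h1 : ∀ y, uWide (1/2) θ (slopesOf d) y ≤ uWide (1/2) θ (slopesOf d') y + ((n:ℝ) - 1) := by
    intro y
    rw [hsl, hsl', ← hn1]
    have := uWide_add_le (1/2) θ hθ0 (w.map (fun x => uslope a x))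
      (w.map (fun x => uslope b x)) (slopesOf w) hcards y
    simpa using this
  have h2 : ∀ y, uWide (1/2) θ (slopesOf d') y ≤ uWide (1/2) θ (slopesOf d) y + ((n:ℝ) - 1) := by
    intro y
    rw [hsl, hsl', ← hn1]
    have := uWide_add_le (1/2) θ hθ0 (w.map (fun x => uslope b x))
      (w.map (fun x => uslope a x)) (slopesOf w) hcards.symm y
    simpa [hn1, hcards] using this
  have := dpWide_ratio (ε / ((n : ℝ) - 1)) (1/2) R θ ((n:ℝ) - 1) hε0
    (slopesOf d) (slopesOf d') h1 h2 E hE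
  have heq : ε / ((n : ℝ) - 1) * ((n:ℝ) - 1) = ε := by
    field_simp
  rw [heq] at this
  exact this
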